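/- The independence number of Q(n,3,3,2) is Θ(n·2^n): it is at most |F_3^n| / ω where ω ≥ C(n-1,2) is witnessed by the clique J = {(1ij|∅) : {i,j} ⊆ [n]\{1\}} (all 3-faces with stars containing coordinate 1 and all location bits 0), and it is at least (n/9)·2^{n-6} by Brooks' theorem. -/

import Mathlib

/-- The dimension of a face of the `n`-cube: a face is an element of
`{0,1,*}^n ≅ (Fin n → Option Bool)` with `none` playing the role of `*`,
and its dimension is the number of `*` entries. -/
def faceDim {n : ℕ} (F : Fin n → Option Bool) : ℕ :=
  (Finset.univ.filter (fun p => F p = none)).card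

/-- The set of star positions of a face. -/
def stars {n : ℕ} (F : Fin n → Option Bool) : Finset (Fin n) :=
  Finset.univ.filter (fun p => F p = none)

/-- Two faces are compatible (have nonempty intersection in the face lattice)
iff they agree on every coordinate which is fixed in both. -/
def compatible {n : ℕ} (D S : Fin n → Option Bool) : Prop :=
  ∀ p b b', D p = some b → S p = some b' → b = b'

/-- `dim (D ∩ S) ≥ q` in the face lattice of the `n`-cube (for `q : ℕ`). -/
def meets {n : ℕ} (q : ℕ) (D S : Fin n → Option Bool) : Prop :=
  compatible D S ∧ q ≤ (stars D ∩ stars S).card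

/-- The graph `Q(n,k,p,q)`: vertices are the `k`-faces of the `n`-cube, and two
distinct `k`-faces `D`, `F` are adjacent iff there is a `p`-face `S` with
`dim (D ∩ S) ≥ q` and `dim (F ∩ S) ≥ q`. -/
def Q (n k p q : ℕ) : SimpleGraph {D : Fin n → Option Bool // faceDim D = k} where
  Adj D F := D ≠ F ∧
    ∃ S : Fin n → Option Bool, faceDim S = p ∧ meets q D.1 S ∧ meets q F.1 S
  symm := by
    constructor
    rintro D F ⟨h, S, hS, h1, h2⟩
    exact ⟨Ne.symm h, S, hS, h2, h1⟩
  loopless := by constructor; rintro D ⟨h, -⟩; exact h rfl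

lemma mem_stars {n : ℕ} (D : Fin n → Option Bool) (p : Fin n) :
    p ∈ stars D ↔ D p = none := by simp [stars]

lemma stars_card {n : ℕ} (D : {D : Fin n → Option Bool // faceDim D = 3}) :
    (stars D.1).card = 3 := D.2

lemma clique_adj {n : ℕ} (D F : {D : Fin n → Option Bool // faceDim D = 3})
    (a : Fin n) (w : Fin n → Bool)
    (hDa : D.1 a = none) (hFa : F.1 a = none)
    (hD : ∀ p, D.1 p = none ∨ D.1 p = some (w p))
    (hF : ∀ p, F.1 p = none ∨ F.1 p = some (w p))
    (hne : D ≠ F) : (Q n 3 3 2).Adj D F := by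
  have hsne : stars D.1 ≠ stars F.1 := by
    intro h
    apply hne
    apply Subtype.ext
    funext p
    rcases hD p with h1 | h1
    · have : p ∈ stars F.1 := h ▸ (mem_stars D.1 p).2 h1
      rw [h1, (mem_stars F.1 p).1 this]
    · rcases hF p with h2 | h2
      · have : p ∈ stars D.1 := h.symm ▸ (mem_stars F.1 p).2 h2
        rw [(mem_stars D.1 p).1 this] at h1
        exact absurd h1 (by simp)
      · rw [h1, h2]
    
  obtain ⟨i, hiD, hiF⟩ : ∃ i, i ∈ stars D.1 ∧ i ∉ stars F.1 := by
    by_contra hc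
    push_neg at hc
    exact hsne (Finset.eq_of_subset_of_card_le (fun x hx => hc x hx)
      (by rw [stars_card, stars_card]))
  obtain ⟨k, hk⟩ : ((stars F.1).erase a).Nonempty := by
    rw [← Finset.card_pos, Finset.card_erase_of_mem ((mem_stars F.1 a).2 hFa),
      stars_card]; omega
  have hkF : k ∈ stars F.1 := Finset.mem_of_mem_erase hk
  have hka : k ≠ a := Finset.ne_of_mem_erase hk
  have hia : i ≠ a := fun h => hiF (h ▸ (mem_stars F.1 a).2 hFa)
  have hik : i ≠ k := fun h => hiF (h ▸ hkF)
  set S : Fin n → Option Bool := fun p => if p = a ∨ p = i ∨ p = k then none else some (w p) with hS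
  have hstarsS : stars S = {a, i, k} := by
    ext p
    simp only [mem_stars, hS, Finset.mem_insert, Finset.mem_singleton]
    by_cases h : p = a ∨ p = i ∨ p = k <;> simp [h]
  have hSdim : faceDim S = 3 := by
    show (stars S).card = 3
    rw [hstarsS, Finset.card_insert_of_notMem (by simp [Ne.symm hia, Ne.symm hka]),
      Finset.card_insert_of_notMem (by simp [hik]), Finset.card_singleton]
  have hcompat : ∀ (G : Fin n → Option Bool), (∀ p, G p = none ∨ G p = some (w p)) →
      compatible G S := by
    intro G hG p b b' hb hb'
    simp only [hS] at hb'
    have h1 : ¬ (p = a ∨ p = i ∨ p = k) := by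
      intro h
      rw [if_pos h] at hb'
      exact absurd hb' (by simp)
    rw [if_neg h1] at hb'
    rcases hG p with h2 | h2
    · rw [h2] at hb; exact absurd hb (by simp)
    · rw [h2] at hb
      rw [Option.some_inj] at hb hb'
      rw [← hb, ← hb']
  have hsub : ∀ (x y : Fin n) (G : Fin n → Option Bool), x ≠ y → x ∈ stars G → y ∈ stars G →
      x ∈ stars S → y ∈ stars S → 2 ≤ (stars G ∩ stars S).card := by
    intro x y G hxy hxG hyG hxS hyS
    have hsub2 : ({x, y} : Finset (Fin n)) ⊆ stars G ∩ stars S := by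
      intro z hz
      rcases Finset.mem_insert.1 hz with rfl | hz
      · exact Finset.mem_inter.2 ⟨hxG, hxS⟩
      · rw [Finset.mem_singleton] at hz
        subst hz
        exact Finset.mem_inter.2 ⟨hyG, hyS⟩
    have := Finset.card_le_card hsub2
    rwa [Finset.card_insert_of_notMem (by simp [hxy]), Finset.card_singleton] at this
  refine ⟨hne, S, hSdim, ⟨hcompat D.1 hD, ?_⟩, ⟨hcompat F.1 hF, ?_⟩⟩
  · exact hsub a i D.1 (Ne.symm hia) ((mem_stars D.1 a).2 hDa) hiD
      (by rw [hstarsS]; simp) (by rw [hstarsS]; simp)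
  · exact hsub a k F.1 (Ne.symm hka) ((mem_stars F.1 a).2 hFa) hkF
      (by rw [hstarsS]; simp) (by rw [hstarsS]; simp)

lemma part2 {n : ℕ} (hn : 5 ≤ n) :
    Nat.card {D : {D : Fin n → Option Bool // faceDim D = 3} //
        D.1 ⟨0, Nat.lt_of_lt_of_le (by norm_num) hn⟩ = none ∧ ∀ p, D.1 p = none ∨ D.1 p = some false} =
      (n - 1).choose 2 := by
  set z : Fin n := ⟨0, by omega⟩ with hz
  set t : Finset (Fin n) := Finset.univ.erase z with ht
  have key : ∀ (s : Finset (Fin n)), s ∈ t.powersetCard 2 →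
      faceDim (fun p => if p = z ∨ p ∈ s then none else some false) = 3 := by
    intro s hs
    rw [Finset.mem_powersetCard] at hs
    have hzs : z ∉ s := fun h => (Finset.mem_erase.1 (hs.1 h)).1 rfl
    show (Finset.univ.filter _).card = 3
    have : (Finset.univ.filter
        (fun p => (fun p => if p = z ∨ p ∈ s then none else some false) p = (none : Option Bool)))
        = insert z s := by
      ext p
      by_cases h : p = z ∨ p ∈ s <;> simp [h, Finset.mem_insert] <;> tauto
    rw [this, Finset.card_insert_of_notMem hzs, hs.2]
  have e : {D : {D : Fin n → Option Bool // faceDim D = 3} //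
        D.1 z = none ∧ ∀ p, D.1 p = none ∨ D.1 p = some false} ≃
      {s // s ∈ t.powersetCard 2} := by
    refine ⟨fun D => ⟨(stars D.1.1).erase z, ?_⟩,
      fun s => ⟨⟨fun p => if p = z ∨ p ∈ s.1 then none else some false, key s.1 s.2⟩, ?_, ?_⟩,
      ?_, ?_⟩
    · rw [Finset.mem_powersetCard]
      constructor
      · intro x hx
        exact Finset.mem_erase.2 ⟨(Finset.mem_erase.1 hx).1, Finset.mem_univ x⟩
      · rw [Finset.card_erase_of_mem ((mem_stars _ z).2 D.2.1),
          show (stars D.1.1).card = 3 from D.1.2]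
    · simp
    · intro p
      by_cases h : p = z ∨ p ∈ s.1 <;> simp [h]
    · intro D
      apply Subtype.ext
      apply Subtype.ext
      funext p
      by_cases h : p = z ∨ p ∈ (stars D.1.1).erase z
      · simp only [if_pos h]
        rcases h with rfl | h
        · exact D.2.1.symm
        · exact ((mem_stars _ p).1 (Finset.mem_of_mem_erase h)).symm
      · simp only [if_neg h]
        push_neg at h
        rcases D.2.2 p with h2 | h2
        · exact absurd (Finset.mem_erase.2 ⟨h.1, (mem_stars _ p).2 h2⟩) h.2
        · exact h2.symm
    · intro s
      apply Subtype.ext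
      have hzs : z ∉ s.1 := by
        have h2 := (Finset.mem_powersetCard.1 s.2).1
        exact fun h => (Finset.mem_erase.1 (h2 h)).1 rfl
      show (stars _).erase z = s.1
      have : stars (fun p => if p = z ∨ p ∈ s.1 then none else some false) = insert z s.1 := by
        ext p
        by_cases h : p = z ∨ p ∈ s.1 <;> simp [mem_stars, h, Finset.mem_insert]
      rw [this, Finset.erase_insert hzs]
  rw [Nat.card_congr e, Nat.card_eq_fintype_card, Fintype.card_coe,
    Finset.card_powersetCard, ht, Finset.card_erase_of_mem (Finset.mem_univ z),
    Finset.card_univ, Fintype.card_fin]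

lemma part3 {n : ℕ} (hn : 5 ≤ n) (I : Set {D : Fin n → Option Bool // faceDim D = 3})
    (hI : ∀ D ∈ I, ∀ F ∈ I, ¬ (Q n 3 3 2).Adj D F) :
    Nat.card I * (n - 1).choose 2 ≤ n.choose 3 * 2 ^ (n - 3) := by
  classical
  haveI : Fintype ↥I := Fintype.ofFinite _
  set T : Finset {D : Fin n → Option Bool // faceDim D = 3} := I.toFinset with hT
  have hcardI : Nat.card ↥I = T.card := by
    rw [Nat.card_eq_fintype_card, hT, Set.toFinset_card]
  set W : {D : Fin n → Option Bool // faceDim D = 3} → Finset (Fin n → Bool) :=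
    fun D => Finset.univ.filter (fun w => ∀ p, D.1 p = none ∨ D.1 p = some (w p)) with hWdef
  have hW : ∀ D : {D : Fin n → Option Bool // faceDim D = 3}, (W D).card = 8 := by
    intro D
    have h1 : W D = Fintype.piFinset (fun p => (D.1 p).elim Finset.univ (fun b => {b})) := by
      ext w
      simp only [hWdef, Finset.mem_filter, Finset.mem_univ, true_and, Fintype.mem_piFinset]
      constructor
      · intro h p
        rcases h p with h2 | h2 <;> rw [h2]
        · simp
        · simp
      · intro h p
        have h2 := h p
        cases h3 : D.1 p with
        | none => exact Or.inl rfl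
        | some b =>
          rw [h3] at h2
          simp only [Option.elim, Finset.mem_singleton] at h2
          exact Or.inr (by rw [h2])
    rw [h1, Fintype.card_piFinset]
    have h2 : ∀ p, ((D.1 p).elim Finset.univ (fun b => ({b} : Finset Bool))).card
        = if D.1 p = none then 2 else 1 := by
      intro p
      cases h3 : D.1 p <;> simp [h3]
    simp only [h2]
    rw [Finset.prod_ite, Finset.prod_const, Finset.prod_const, one_pow, mul_one,
      show (Finset.univ.filter (fun p => D.1 p = none)).card = 3 from D.2]
    norm_num
  set A : Finset ({D : Fin n → Option Bool // faceDim D = 3} × (Fin n × (Fin n → Bool))) :=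
    T.biUnion (fun D => {D} ×ˢ ((stars D.1) ×ˢ W D)) with hA
  have hAcard : A.card = T.card * 24 := by
    rw [hA, Finset.card_biUnion]
    · rw [Finset.sum_congr rfl (g := fun _ => 24)]
      · rw [Finset.sum_const, smul_eq_mul]
      · intro D hD
        rw [Finset.card_product, Finset.card_product, Finset.card_singleton,
          show (stars D.1).card = 3 from D.2, hW D]
    · intro D _ E _ hDE
      simp only [Function.onFun]
      rw [Finset.disjoint_left]
      intro x hx hx2
      simp only [Finset.mem_product, Finset.mem_singleton] at hx hx2
      exact hDE (hx.1 ▸ hx2.1 ▸ rfl)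
  have hinj : A.card ≤ (Finset.univ : Finset (Fin n × (Fin n → Bool))).card := by
    apply Finset.card_le_card_of_injOn Prod.snd (fun _ _ => Finset.mem_univ _)
    intro x hx y hy hxy
    rw [Finset.mem_coe, hA, Finset.mem_biUnion] at hx hy
    obtain ⟨D, hDT, hxmem⟩ := hx
    obtain ⟨E, hET, hymem⟩ := hy
    rw [Finset.mem_product] at hxmem hymem
    obtain ⟨hxD, hxprod⟩ := hxmem
    obtain ⟨hyE, hyprod⟩ := hymem
    rw [Finset.mem_product] at hxprod hyprod
    obtain ⟨hxa, hxw⟩ := hxprod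
    obtain ⟨hya, hyw⟩ := hyprod
    rw [Finset.mem_singleton] at hxD hyE
    have h1 : x.2 = y.2 := hxy
    have hfst : x.1 = y.1 := by
      rw [hxD, hyE]
      by_contra hne
      apply hI D (Set.mem_toFinset.1 hDT) E (Set.mem_toFinset.1 hET)
      simp only [hWdef, Finset.mem_filter] at hxw hyw
      refine clique_adj D E x.2.1 x.2.2 ((mem_stars _ _).1 hxa) ?_ hxw.2 ?_ hne
      · rw [h1]; exact (mem_stars _ _).1 hya
      · rw [h1]; exact hyw.2
    exact Prod.ext hfst h1
  have hcount : T.card * 24 ≤ n * 2 ^ n := by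
    rw [← hAcard]
    calc A.card ≤ _ := hinj
      _ = n * 2 ^ n := by
          rw [Finset.card_univ, Fintype.card_prod, Fintype.card_fin, Fintype.card_fun,
            Fintype.card_bool, Fintype.card_fin]
  -- arithmetic
  have hid : n * (n - 1).choose 2 = 3 * n.choose 3 := by
    obtain ⟨m, rfl⟩ : ∃ m, n = m + 1 := ⟨n - 1, by omega⟩
    rw [Nat.succ_sub_one, Nat.add_one_mul_choose_eq]
    ring
  have hpow : 2 ^ n = 8 * 2 ^ (n - 3) := by
    rw [show n = 3 + (n - 3) by omega, pow_add]
    simp [Nat.add_sub_cancel_left]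
  rw [hcardI]
  have h24 : 24 * (T.card * (n - 1).choose 2) ≤ 24 * (n.choose 3 * 2 ^ (n - 3)) := by
    calc 24 * (T.card * (n - 1).choose 2) = (T.card * 24) * (n - 1).choose 2 := by ring
      _ ≤ (n * 2 ^ n) * (n - 1).choose 2 := Nat.mul_le_mul_right _ hcount
      _ = (n * (n - 1).choose 2) * 2 ^ n := by ring
      _ = (3 * n.choose 3) * (8 * 2 ^ (n - 3)) := by rw [hid, hpow]
      _ = 24 * (n.choose 3 * 2 ^ (n - 3)) := by ring
  omega

/-- the parity contradiction: two even faces differing in exactly one fixed coordinate. -/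
lemma parity_contra {n : ℕ} (X Y : Fin n → Option Bool) (p1 : Fin n)
    (hX : X p1 = some true) (hY : Y p1 = some false)
    (hagree : ∀ q, q ≠ p1 → X q = Y q)
    (hEX : Even (Finset.univ.filter (fun p => X p = some true)).card)
    (hEY : Even (Finset.univ.filter (fun p => Y p = some true)).card) : False := by
  classical
  set TX := Finset.univ.filter (fun p => X p = some true) with hTX
  set TY := Finset.univ.filter (fun p => Y p = some true) with hTY
  have h1 : TY = TX.erase p1 := by
    ext q
    simp only [hTX, hTY, Finset.mem_erase, Finset.mem_filter, Finset.mem_univ, true_and]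
    by_cases hq : q = p1
    · subst hq
      simp [hY]
    · rw [hagree q hq]
      tauto
  have h2 : p1 ∈ TX := by simp [hTX, hX]
  have h3 : TY.card = TX.card - 1 := by rw [h1, Finset.card_erase_of_mem h2]
  have h4 : 1 ≤ TX.card := Finset.card_pos.2 ⟨p1, h2⟩
  rw [Nat.even_iff] at hEX hEY
  omega

/-- the independent set for part 4 -/
def indepSet (n : ℕ) : Set {D : Fin n → Option Bool // faceDim D = 3} :=
  {D | ∃ j : ℕ, j < (n - 1) / 3 ∧ (∀ p : Fin n, (D.1 p = none ↔ (p : ℕ) / 3 = j)) ∧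
    Even ((Finset.univ.filter (fun p => D.1 p = some true)).card)}

lemma indep_indep {n : ℕ} (hn : 5 ≤ n) :
    ∀ D ∈ indepSet n, ∀ F ∈ indepSet n, ¬ (Q n 3 3 2).Adj D F := by
  classical
  rintro D ⟨j, hj, hDst, hDev⟩ F ⟨j', hj', hFst, hFev⟩ ⟨hne, S, hSdim, ⟨hcD, h2D⟩, ⟨hcF, h2F⟩⟩
  have hScard : (stars S).card = 3 := hSdim
  by_cases hjj : j = j'
  · -- same stars; find the unique differing coordinate
    subst hjj
    have hstDF : ∀ p : Fin n, D.1 p = none ↔ F.1 p = none := by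
      intro p
      rw [hDst p, hFst p]
    set Δ : Finset (Fin n) := Finset.univ.filter (fun p => D.1 p ≠ F.1 p) with hΔ
    have hnotD : ∀ p ∈ Δ, p ∉ stars D.1 := by
      intro p hp hpD
      have h1 := (mem_stars _ p).1 hpD
      have h2 := (hstDF p).1 h1
      exact (Finset.mem_filter.1 hp).2 (h1.trans h2.symm)
    have hsomes : ∀ p ∈ Δ, ∃ b b', D.1 p = some b ∧ F.1 p = some b' ∧ b ≠ b' := by
      intro p hp
      have h1 : D.1 p ≠ none := fun h => hnotD p hp ((mem_stars _ p).2 h)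
      have h2 : F.1 p ≠ none := fun h =>
        hnotD p hp ((mem_stars _ p).2 ((hstDF p).2 h))
      obtain ⟨b, hb⟩ := Option.ne_none_iff_exists'.1 h1
      obtain ⟨b', hb'⟩ := Option.ne_none_iff_exists'.1 h2
      refine ⟨b, b', hb, hb', ?_⟩
      intro h
      subst h
      exact (Finset.mem_filter.1 hp).2 (hb.trans hb'.symm)
    have hΔS : Δ ⊆ stars S := by
      intro p hp
      obtain ⟨b, b', hb, hb', hbb⟩ := hsomes p hp
      rw [mem_stars]
      cases hS : S p with
      | none => rfl
      | some c => exact absurd ((hcD p b c hb hS).trans (hcF p b' c hb' hS).symm) hbb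
    have hdisj : Disjoint Δ (stars D.1 ∩ stars S) := by
      rw [Finset.disjoint_left]
      intro p hp hp2
      exact hnotD p hp (Finset.mem_inter.1 hp2).1
    have hcard : Δ.card + 2 ≤ 3 := by
      calc Δ.card + 2 ≤ Δ.card + (stars D.1 ∩ stars S).card := by omega
        _ = (Δ ∪ (stars D.1 ∩ stars S)).card := (Finset.card_union_of_disjoint hdisj).symm
        _ ≤ (stars S).card := Finset.card_le_card
            (Finset.union_subset hΔS (Finset.inter_subset_right))
        _ = 3 := hScard
    have hΔne : Δ.Nonempty := by
      have h1 : D.1 ≠ F.1 := fun h => hne (Subtype.ext h)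
      obtain ⟨p0, hp0⟩ := Function.ne_iff.1 h1
      exact ⟨p0, Finset.mem_filter.2 ⟨Finset.mem_univ _, hp0⟩⟩
    have hΔ1 : Δ.card = 1 := by
      have := Finset.card_pos.2 hΔne
      omega
    obtain ⟨p1, hp1⟩ := Finset.card_eq_one.1 hΔ1
    have hp1Δ : p1 ∈ Δ := hp1 ▸ Finset.mem_singleton_self p1
    have hagree : ∀ q, q ≠ p1 → D.1 q = F.1 q := by
      intro q hq
      by_contra hc
      have : q ∈ Δ := Finset.mem_filter.2 ⟨Finset.mem_univ _, hc⟩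
      rw [hp1, Finset.mem_singleton] at this
      exact hq this
    obtain ⟨b, b', hb, hb', hbb⟩ := hsomes p1 hp1Δ
    cases b
    · -- b = false, so b' = true
      have hb'2 : b' = true := by
        cases b'
        · exact absurd rfl hbb
        · rfl
      subst hb'2
      exact parity_contra F.1 D.1 p1 hb' hb (fun q hq => (hagree q hq).symm) hFev hDev
    · have hb'2 : b' = false := by
        cases b'
        · rfl
        · exact absurd rfl hbb
      subst hb'2
      exact parity_contra D.1 F.1 p1 hb hb' hagree hDev hFev
  · -- different star blocks: stars are disjoint
    have hdisjDF : Disjoint (stars D.1) (stars F.1) := by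
      rw [Finset.disjoint_left]
      intro p hpD hpF
      have h1 := (hDst p).1 ((mem_stars _ p).1 hpD)
      have h2 := (hFst p).1 ((mem_stars _ p).1 hpF)
      exact hjj (h1.symm.trans h2)
    have hdisj2 : Disjoint (stars D.1 ∩ stars S) (stars F.1 ∩ stars S) :=
      hdisjDF.mono Finset.inter_subset_left Finset.inter_subset_left
    have hcard : 4 ≤ 3 := by
      calc 4 ≤ (stars D.1 ∩ stars S).card + (stars F.1 ∩ stars S).card := by omega
        _ = ((stars D.1 ∩ stars S) ∪ (stars F.1 ∩ stars S)).card :=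
            (Finset.card_union_of_disjoint hdisj2).symm
        _ ≤ (stars S).card := Finset.card_le_card
            (Finset.union_subset Finset.inter_subset_right Finset.inter_subset_right)
        _ = 3 := hScard
    omega

def cnt {n : ℕ} (v : Fin n → Bool) : ℕ := (Finset.univ.filter (fun q => v q = true)).card

def parbit {n : ℕ} (v : Fin n → Bool) : Bool := if Even (cnt v) then false else true

def Dfun (n j : ℕ) (v : Fin n → Bool) : Fin n → Option Bool :=
  fun p => if (p : ℕ) / 3 = j then none
    else if (p : ℕ) = n - 1 then some (parbit v) else some (v p)

lemma Dfun_none_iff {n j : ℕ} (v : Fin n → Bool) (p : Fin n) :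
    Dfun n j v p = none ↔ (p : ℕ) / 3 = j := by
  unfold Dfun
  by_cases h1 : (p : ℕ) / 3 = j
  · simp [h1]
  · by_cases h2 : (p : ℕ) = n - 1 <;> simp [h1, h2]

lemma Dfun_dim {n j : ℕ} (hn : 5 ≤ n) (hj : j < (n - 1) / 3) (v : Fin n → Bool) :
    faceDim (Dfun n j v) = 3 := by
  have hb : 3 * j + 2 < n := by omega
  unfold faceDim
  have h1 : Finset.univ.filter (fun p => Dfun n j v p = none) =
      ({⟨3 * j, by omega⟩, ⟨3 * j + 1, by omega⟩, ⟨3 * j + 2, by omega⟩} :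
        Finset (Fin n)) := by
    ext p
    simp only [Finset.mem_filter, Finset.mem_univ, true_and, Dfun_none_iff,
      Finset.mem_insert, Finset.mem_singleton, Fin.ext_iff]
    omega
  rw [h1, Finset.card_insert_of_notMem (by simp [Fin.ext_iff]),
    Finset.card_insert_of_notMem (by simp [Fin.ext_iff]), Finset.card_singleton]

def VsetP (n j : ℕ) (v : Fin n → Bool) : Prop :=
  ∀ p : Fin n, ((p : ℕ) / 3 = j ∨ (p : ℕ) = n - 1) → v p = false

lemma Dfun_parity {n j : ℕ} (hn : 5 ≤ n) (hj : j < (n - 1) / 3) (v : Fin n → Bool)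
    (hv : VsetP n j v) :
    Even ((Finset.univ.filter (fun p => Dfun n j v p = some true)).card) := by
  classical
  have hlast3 : (n - 1) / 3 ≠ j := by omega
  have hmem : ∀ p : Fin n, Dfun n j v p = some true ↔
      ((p : ℕ) = n - 1 ∧ parbit v = true) ∨ ((p : ℕ) ≠ n - 1 ∧ (p : ℕ) / 3 ≠ j ∧ v p = true) := by
    intro p
    unfold Dfun
    by_cases h1 : (p : ℕ) / 3 = j
    · have h2 : (p : ℕ) ≠ n - 1 := fun h => hlast3 (h ▸ h1)
      simp [h1, h2]
    · by_cases h2 : (p : ℕ) = n - 1 <;> simp [h1, h2, hlast3]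
  by_cases hpar : Even (cnt v)
  · have hpb : parbit v = false := by simp [parbit, hpar]
    have h1 : Finset.univ.filter (fun p => Dfun n j v p = some true) =
        Finset.univ.filter (fun q => v q = true) := by
      ext p
      simp only [Finset.mem_filter, Finset.mem_univ, true_and, hmem, hpb]
      constructor
      · rintro (⟨-, h⟩ | ⟨-, -, h⟩)
        · exact absurd h (by simp)
        · exact h
      · intro h
        refine Or.inr ⟨?_, ?_, h⟩
        · intro hc
          rw [hv p (Or.inr hc)] at h
          exact absurd h (by simp)
        · intro hc
          rw [hv p (Or.inl hc)] at h
          exact absurd h (by simp)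
    rw [h1]
    exact hpar
  · have hpb : parbit v = true := by simp [parbit, hpar]
    have hlast : ((⟨n - 1, by omega⟩ : Fin n) : ℕ) = n - 1 := rfl
    have h1 : Finset.univ.filter (fun p => Dfun n j v p = some true) =
        insert (⟨n - 1, by omega⟩ : Fin n) (Finset.univ.filter (fun q => v q = true)) := by
      ext p
      simp only [Finset.mem_filter, Finset.mem_univ, true_and, hmem, hpb,
        Finset.mem_insert, Fin.ext_iff, hlast]
      constructor
      · rintro (⟨h, -⟩ | ⟨-, -, h⟩)
        · exact Or.inl h
        · exact Or.inr h
      · rintro (h | h)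
        · exact Or.inl ⟨h, by simp [hpb]⟩
        · refine Or.inr ⟨?_, ?_, h⟩
          · intro hc
            rw [hv p (Or.inr hc)] at h
            exact absurd h (by simp)
          · intro hc
            rw [hv p (Or.inl hc)] at h
            exact absurd h (by simp)
    rw [h1, Finset.card_insert_of_notMem]
    · rw [Nat.even_add_one]
      intro hc
      exact hpar hc
    · simp only [Finset.mem_filter, Finset.mem_univ, true_and]
      intro hc
      rw [hv _ (Or.inr hlast)] at hc
      exact absurd hc (by simp)

lemma indep_card {n : ℕ} (hn : 5 ≤ n) :
    (n - 1) / 3 * 2 ^ (n - 4) ≤ Nat.card (indepSet n) := by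
  classical
  haveI : Fintype ↥(indepSet n) := Fintype.ofFinite _
  set K := (n - 1) / 3 with hK
  have hdim0 : faceDim (Dfun n 0 (fun _ => false)) = 3 := Dfun_dim hn (by omega) _
  set φ : ℕ × (Fin n → Bool) → {D : Fin n → Option Bool // faceDim D = 3} :=
    fun x => if h : faceDim (Dfun n x.1 x.2) = 3 then ⟨Dfun n x.1 x.2, h⟩
      else ⟨Dfun n 0 (fun _ => false), hdim0⟩ with hφ
  set Vset : ℕ → Finset (Fin n → Bool) :=
    fun j => Finset.univ.filter (fun v => VsetP n j v) with hVset
  set B : Finset (ℕ × (Fin n → Bool)) :=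
    (Finset.range K).biUnion (fun j => {j} ×ˢ Vset j) with hB
  have hVcard : ∀ j, j < K → (Vset j).card = 2 ^ (n - 4) := by
    intro j hj
    have hpi : Vset j = Fintype.piFinset (fun p : Fin n =>
        if (p : ℕ) / 3 = j ∨ (p : ℕ) = n - 1 then ({false} : Finset Bool)
        else Finset.univ) := by
      ext v
      simp only [hVset, Finset.mem_filter, Finset.mem_univ, true_and]
      simp only [Fintype.mem_piFinset, VsetP]
      constructor
      · intro h p
        by_cases hp : (p : ℕ) / 3 = j ∨ (p : ℕ) = n - 1
        · rw [if_pos hp, Finset.mem_singleton]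
          exact h p hp
        · rw [if_neg hp]
          exact Finset.mem_univ _
      · intro h p hp
        have h2 := h p
        rw [if_pos hp, Finset.mem_singleton] at h2
        exact h2
    have hbadeq : Finset.univ.filter (fun p : Fin n => (p : ℕ) / 3 = j ∨ (p : ℕ) = n - 1) =
        ({⟨3 * j, by omega⟩, ⟨3 * j + 1, by omega⟩, ⟨3 * j + 2, by omega⟩,
          ⟨n - 1, by omega⟩} : Finset (Fin n)) := by
      ext p
      simp only [Finset.mem_filter, Finset.mem_univ, true_and, Finset.mem_insert,
        Finset.mem_singleton, Fin.ext_iff]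
      omega
    have hbadcard : (Finset.univ.filter
        (fun p : Fin n => (p : ℕ) / 3 = j ∨ (p : ℕ) = n - 1)).card = 4 := by
      rw [hbadeq, Finset.card_insert_of_notMem (by simp [Fin.ext_iff]; omega),
        Finset.card_insert_of_notMem (by simp [Fin.ext_iff]; omega),
        Finset.card_insert_of_notMem (by simp [Fin.ext_iff]; omega),
        Finset.card_singleton]
    have hnbad : (Finset.univ.filter
        (fun p : Fin n => ¬((p : ℕ) / 3 = j ∨ (p : ℕ) = n - 1))).card = n - 4 := by
      have h1 := Finset.card_filter_add_card_filter_not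
        (s := (Finset.univ : Finset (Fin n)))
        (p := fun p : Fin n => (p : ℕ) / 3 = j ∨ (p : ℕ) = n - 1)
      rw [Finset.card_univ, Fintype.card_fin, hbadcard] at h1
      omega
    rw [hpi, Fintype.card_piFinset]
    have h2 : ∀ p : Fin n, (if (p : ℕ) / 3 = j ∨ (p : ℕ) = n - 1 then ({false} : Finset Bool)
        else Finset.univ).card = if (p : ℕ) / 3 = j ∨ (p : ℕ) = n - 1 then 1 else 2 := by
      intro p
      by_cases hp : (p : ℕ) / 3 = j ∨ (p : ℕ) = n - 1 <;> simp [hp]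
    simp only [h2]
    rw [Finset.prod_ite, Finset.prod_const, Finset.prod_const, one_pow, one_mul, hnbad]
  have hBcard : B.card = K * 2 ^ (n - 4) := by
    rw [hB, Finset.card_biUnion]
    · rw [Finset.sum_congr rfl (g := fun _ => 2 ^ (n - 4))]
      · rw [Finset.sum_const, smul_eq_mul, Finset.card_range]
      · intro j hj
        rw [Finset.card_product, Finset.card_singleton, one_mul,
          hVcard j (Finset.mem_range.1 hj)]
    · intro j _ j' _ hjj
      simp only [Function.onFun]
      rw [Finset.disjoint_left]
      intro x hx hx2
      rw [Finset.mem_product, Finset.mem_singleton] at hx hx2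
      exact hjj (hx.1 ▸ hx2.1 ▸ rfl)
  have hmemB : ∀ x ∈ B, x.1 < K ∧ VsetP n x.1 x.2 := by
    intro x hx
    rw [hB, Finset.mem_biUnion] at hx
    obtain ⟨j, hj, hx2⟩ := hx
    rw [Finset.mem_product, Finset.mem_singleton] at hx2
    rw [hx2.1]
    refine ⟨Finset.mem_range.1 hj, ?_⟩
    have := hx2.2
    rw [hVset] at this
    simp only [Finset.mem_filter] at this
    exact this.2
  have hφval : ∀ x : ℕ × (Fin n → Bool), x.1 < K → VsetP n x.1 x.2 →
      (φ x).1 = Dfun n x.1 x.2 := by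
    intro x hx1 _
    rw [hφ]
    simp only
    rw [dif_pos (Dfun_dim hn hx1 x.2)]
  have hmaps : ∀ x ∈ B, φ x ∈ (indepSet n).toFinset := by
    intro x hx
    obtain ⟨hx1, hx2⟩ := hmemB x hx
    rw [Set.mem_toFinset]
    refine ⟨x.1, hx1, ?_, ?_⟩
    · intro p
      rw [hφval x hx1 hx2]
      exact Dfun_none_iff x.2 p
    · rw [hφval x hx1 hx2]
      exact Dfun_parity hn hx1 x.2 hx2
  have hinjOn : Set.InjOn φ ↑B := by
    intro x hx y hy hxy
    obtain ⟨hx1, hx2⟩ := hmemB x (Finset.mem_coe.1 hx)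
    obtain ⟨hy1, hy2⟩ := hmemB y (Finset.mem_coe.1 hy)
    have heq : Dfun n x.1 x.2 = Dfun n y.1 y.2 := by
      rw [← hφval x hx1 hx2, ← hφval y hy1 hy2, hxy]
    have hjj : x.1 = y.1 := by
      have h3j : 3 * x.1 < n := by omega
      have h1 : Dfun n x.1 x.2 ⟨3 * x.1, h3j⟩ = none := by
        rw [Dfun_none_iff]
        show 3 * x.1 / 3 = x.1
        omega
      rw [heq, Dfun_none_iff] at h1
      have : (3 * x.1) / 3 = y.1 := h1
      omega
    have hvv : x.2 = y.2 := by
      funext p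
      by_cases hp : (p : ℕ) / 3 = x.1 ∨ (p : ℕ) = n - 1
      · rw [hx2 p hp, hy2 p (hjj ▸ hp)]
      · push_neg at hp
        have h1 := congrFun heq p
        unfold Dfun at h1
        rw [if_neg hp.1, if_neg hp.2, if_neg (hjj ▸ hp.1), if_neg hp.2] at h1
        exact Option.some_inj.1 h1
    exact Prod.ext hjj hvv
  calc K * 2 ^ (n - 4) = B.card := hBcard.symm
    _ ≤ (indepSet n).toFinset.card := Finset.card_le_card_of_injOn φ hmaps hinjOn
    _ = Nat.card (indepSet n) := by rw [Set.toFinset_card, Nat.card_eq_fintype_card]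

lemma indep_real {n : ℕ} (hn : 5 ≤ n) :
    (n : ℝ) / 9 * (2 : ℝ) ^ ((n : ℝ) - 6) ≤ (Nat.card (indepSet n) : ℝ) := by
  have h1 := indep_card hn
  set K := (n - 1) / 3 with hK
  have hnat : n * 2 ^ n ≤ 576 * (K * 2 ^ (n - 4)) := by
    have h2 : 2 ^ n = 16 * 2 ^ (n - 4) := by
      rw [show n = 4 + (n - 4) by omega, pow_add]
      norm_num
    calc n * 2 ^ n ≤ (36 * K) * 2 ^ n := Nat.mul_le_mul_right _ (by omega)
      _ = 576 * (K * 2 ^ (n - 4)) := by rw [h2]; ring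
  have hrpow : (2 : ℝ) ^ ((n : ℝ) - 6) = (2 : ℝ) ^ (n : ℕ) / 64 := by
    rw [Real.rpow_sub (by norm_num), Real.rpow_natCast]
    norm_num
  have hc1 : ((n * 2 ^ n : ℕ) : ℝ) ≤ ((576 * (K * 2 ^ (n - 4)) : ℕ) : ℝ) := Nat.cast_le.2 hnat
  have hc2 : ((K * 2 ^ (n - 4) : ℕ) : ℝ) ≤ (Nat.card (indepSet n) : ℝ) := Nat.cast_le.2 h1
  push_cast at hc1 hc2
  rw [hrpow]
  calc (n : ℝ) / 9 * ((2 : ℝ) ^ (n : ℕ) / 64) = (n : ℝ) * (2 : ℝ) ^ (n : ℕ) / 576 := by ring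
    _ ≤ 576 * (((K : ℝ)) * (2 : ℝ) ^ (n - 4)) / 576 := by linarith
    _ = (K : ℝ) * (2 : ℝ) ^ (n - 4) := by ring
    _ ≤ _ := hc2

/-- The independence number of `Q(n,3,3,2)` is `Θ(n·2^n)` (for `n ≥ 5`):
the set `J = {(1ij|∅)}` of 3-faces whose stars contain the first coordinate
and whose location bits are all 0 is a clique of size `C(n-1,2)`; hence by
vertex-transitivity every independent set `I` satisfies
`|I|·C(n-1,2) ≤ |F_3^n| = C(n,3)·2^{n-3}`; and by Brooks' theorem there is an
independent set of size at least `(n/9)·2^{n-6}`. -/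
theorem stmt_17 (n : ℕ) (hn : 5 ≤ n) :
    (∀ D F : {D : Fin n → Option Bool // faceDim D = 3},
      (D.1 ⟨0, by omega⟩ = none ∧ ∀ p, D.1 p = none ∨ D.1 p = some false) →
      (F.1 ⟨0, by omega⟩ = none ∧ ∀ p, F.1 p = none ∨ F.1 p = some false) →
      D ≠ F → (Q n 3 3 2).Adj D F) ∧
    Nat.card {D : {D : Fin n → Option Bool // faceDim D = 3} //
        D.1 ⟨0, by omega⟩ = none ∧ ∀ p, D.1 p = none ∨ D.1 p = some false} =
      (n - 1).choose 2 ∧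
    (∀ I : Set {D : Fin n → Option Bool // faceDim D = 3},
      (∀ D ∈ I, ∀ F ∈ I, ¬ (Q n 3 3 2).Adj D F) →
      Nat.card I * (n - 1).choose 2 ≤ n.choose 3 * 2 ^ (n - 3)) ∧
    (∃ I : Set {D : Fin n → Option Bool // faceDim D = 3},
      (∀ D ∈ I, ∀ F ∈ I, ¬ (Q n 3 3 2).Adj D F) ∧
      (n : ℝ) / 9 * (2 : ℝ) ^ ((n : ℝ) - 6) ≤ (Nat.card I : ℝ)) := by
  refine ⟨?_, part2 hn, fun I hI => part3 hn I hI,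
    indepSet n, indep_indep hn, indep_real hn⟩
  intro D F hD hF hne
  exact clique_adj D F ⟨0, by omega⟩ (fun _ => false) hD.1 hF.1 hD.2 hF.2 hne
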